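/- arXiv:1105.1223 — 2 statements merged into one kernel-verified Lean document; each statement's English description precedes it below -/
import Mathlib

section
/- For every X ∈ M₂(ℚ) with tr(X) = 0 and det(X) > 0, the stabilizer {g ∈ SL₂(ℤ) : gXg⁻¹ = X} of X in SL₂(ℤ) under the conjugation action is a finite group. -/
open Matrix

set_option maxHeartbeats 1000000

/-- For every trace-zero `2×2` rational matrix `X` with `det X > 0`,
the stabilizer of `X` in `SL₂(ℤ)` under the conjugation action is finite. -/
theorem stabilizer_of_positive_norm_vector_finite
    (X : Matrix (Fin 2) (Fin 2) ℚ) (htr : Matrix.trace X = 0)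
    (hdet : 0 < Matrix.det X) :
    Set.Finite {g : Matrix.SpecialLinearGroup (Fin 2) ℤ |
      (g : Matrix (Fin 2) (Fin 2) ℤ).map (Int.cast : ℤ → ℚ) * X
          * ((g⁻¹ : Matrix.SpecialLinearGroup (Fin 2) ℤ) :
              Matrix (Fin 2) (Fin 2) ℤ).map (Int.cast : ℤ → ℚ) = X} := by
  classical
  set p : ℚ := X 0 0 with hp
  set q : ℚ := X 0 1 with hq
  set r : ℚ := X 1 0 with hr
  have hs : X 1 1 = -p := by
    have h := htr
    simp [Matrix.trace_fin_two] at h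
    linarith
  set D : ℚ := X.det with hD
  have hDval : D = -p^2 - q*r := by
    rw [hD, Matrix.det_fin_two, hs]; ring
  have hDpos : 0 < D := hdet
  have hqne : q ≠ 0 := by
    intro h
    rw [h] at hDval
    nlinarith [sq_nonneg p]
  set K : ℚ := 2*D + 2*(p^2 + q^2 + r^2) with hK
  set N : ℤ := ⌈K / D⌉ with hN
  -- generic bound transfer
  have habs : ∀ n : ℤ, ((n : ℚ))^2 * D ≤ K → n ∈ Set.Icc (-N) N := by
    intro n hn
    have h1 : ((n : ℚ))^2 ≤ K / D := (le_div_iff₀ hDpos).2 hn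
    have h2 : ((n : ℚ))^2 ≤ (N : ℚ) := h1.trans (Int.le_ceil _)
    have h3 : n^2 ≤ N := by exact_mod_cast h2
    have h4 : n ≤ n^2 := by nlinarith [sq_nonneg (2*n-1), sq_nonneg n]
    have h5 : -n ≤ n^2 := by nlinarith [sq_nonneg (2*n+1), sq_nonneg n]
    constructor <;> omega
  -- entry bounds for stabilizer elements
  have hbound : ∀ g : Matrix.SpecialLinearGroup (Fin 2) ℤ,
      (g : Matrix (Fin 2) (Fin 2) ℤ).map (Int.cast : ℤ → ℚ) * X
          * ((g⁻¹ : Matrix.SpecialLinearGroup (Fin 2) ℤ) :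
              Matrix (Fin 2) (Fin 2) ℤ).map (Int.cast : ℤ → ℚ) = X →
      ∀ i j, (g : Matrix (Fin 2) (Fin 2) ℤ) i j ∈ Set.Icc (-N) N := by
    intro g hg
    set M : Matrix (Fin 2) (Fin 2) ℚ :=
      (g : Matrix (Fin 2) (Fin 2) ℤ).map (Int.cast : ℤ → ℚ) with hMdef
    set M' : Matrix (Fin 2) (Fin 2) ℚ :=
      ((g⁻¹ : Matrix.SpecialLinearGroup (Fin 2) ℤ) :
        Matrix (Fin 2) (Fin 2) ℤ).map (Int.cast : ℤ → ℚ) with hM'def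
    have hcoe : ∀ (u v : Matrix.SpecialLinearGroup (Fin 2) ℤ), u * v = 1 →
        (u : Matrix (Fin 2) (Fin 2) ℤ).map (Int.cast : ℤ → ℚ) *
        (v : Matrix (Fin 2) (Fin 2) ℤ).map (Int.cast : ℤ → ℚ) = 1 := by
      intro u v huv
      have h : ((u : Matrix (Fin 2) (Fin 2) ℤ) * (v : Matrix (Fin 2) (Fin 2) ℤ)) = 1 := by
        rw [← Matrix.SpecialLinearGroup.coe_mul, huv, Matrix.SpecialLinearGroup.coe_one]
      have h2 : (u : Matrix (Fin 2) (Fin 2) ℤ).map (Int.cast : ℤ → ℚ) *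
          (v : Matrix (Fin 2) (Fin 2) ℤ).map (Int.cast : ℤ → ℚ)
          = (((u : Matrix (Fin 2) (Fin 2) ℤ) * (v : Matrix (Fin 2) (Fin 2) ℤ))).map (Int.cast : ℤ → ℚ) :=
        (Matrix.map_mul (f := Int.castRingHom ℚ)).symm
      rw [h2, h]
      exact Matrix.map_one _ Int.cast_zero Int.cast_one
    have hMM' : M' * M = 1 := hcoe g⁻¹ g (inv_mul_cancel g)
    have hcomm : M * X = X * M := by
      have := congrArg (fun Y => Y * M) hg
      simpa [mul_assoc, hMM'] using this
    set m00 : ℚ := M 0 0 with hm00d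
    set m01 : ℚ := M 0 1 with hm01d
    set m10 : ℚ := M 1 0 with hm10d
    set m11 : ℚ := M 1 1 with hm11d
    have e00 : (M * X) 0 0 = (X * M) 0 0 := by rw [hcomm]
    have e01 : (M * X) 0 1 = (X * M) 0 1 := by rw [hcomm]
    simp only [Matrix.mul_apply, Fin.sum_univ_two, ← hp, ← hq, ← hr, hs,
      ← hm00d, ← hm01d, ← hm10d, ← hm11d] at e00 e01
    -- e00 : m00 * p + m01 * r = p * m00 + q * m10
    -- e01 : m00 * q + m01 * (-p) = p * m01 + q * m11
    have hdetM : m00 * m11 - m01 * m10 = 1 := by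
      have hd : (M).det = 1 := by
        have h := RingHom.map_det (Int.castRingHom ℚ) (g : Matrix (Fin 2) (Fin 2) ℤ)
        rw [show ((g : Matrix (Fin 2) (Fin 2) ℤ)).det = 1 from g.prop] at h
        simpa using h.symm
      rw [Matrix.det_fin_two] at hd
      linarith [hd]
    set a : ℚ := (m00 + m11) / 2 with ha
    set b : ℚ := m01 / q with hb
    have hm01 : m01 = q * b := by rw [hb, mul_div_cancel₀ _ hqne]
    have hm10 : m10 = r * b := by
      rw [hb]; field_simp; linear_combination -e00
    have hm00' : m00 = a + p * b := by
      rw [ha, hb]; field_simp; linear_combination e01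
    have hm11' : m11 = a - p * b := by
      rw [ha, hb]; field_simp; linear_combination -e01
    have hkey : a^2 + D * b^2 = 1 := by
      rw [hm00', hm01, hm10, hm11'] at hdetM
      rw [hDval]
      linear_combination hdetM
    have ha2 : a^2 ≤ 1 := by nlinarith [mul_nonneg hDpos.le (sq_nonneg b)]
    have hb2 : D * b^2 ≤ 1 := by nlinarith [sq_nonneg a]
    have haD : a^2 * D <= D := by nlinarith [ha2, hDpos.le]
    have hpb : (p*b)^2 * D <= p^2 := by nlinarith [hb2, sq_nonneg p]
    have hqb : (q*b)^2 * D <= q^2 := by nlinarith [hb2, sq_nonneg q]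
    have hrb : (r*b)^2 * D <= r^2 := by nlinarith [hb2, sq_nonneg r]
    have h00b : (a + p*b)^2 * D <= K := by
      rw [hK]; nlinarith [mul_nonneg (sq_nonneg (a - p*b)) hDpos.le, haD, hpb, sq_nonneg q, sq_nonneg r]
    have h11b : (a - p*b)^2 * D <= K := by
      rw [hK]; nlinarith [mul_nonneg (sq_nonneg (a + p*b)) hDpos.le, haD, hpb, sq_nonneg q, sq_nonneg r]
    have h01b : (q*b)^2 * D <= K := by
      rw [hK]; nlinarith [hqb, hDpos.le, sq_nonneg p, sq_nonneg r]
    have h10b : (r*b)^2 * D <= K := by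
      rw [hK]; nlinarith [hrb, hDpos.le, sq_nonneg p, sq_nonneg q]
    intro i j
    have hcast : ∀ i j, (((g : Matrix (Fin 2) (Fin 2) ℤ) i j : ℚ)) = M i j := by
      intro i j; rw [hMdef]; simp [Matrix.map_apply]
    fin_cases i <;> fin_cases j
    · exact habs ((g : Matrix (Fin 2) (Fin 2) ℤ) 0 0) (by rw [hcast 0 0, ← hm00d, hm00']; exact h00b)
    · exact habs ((g : Matrix (Fin 2) (Fin 2) ℤ) 0 1) (by rw [hcast 0 1, ← hm01d, hm01]; exact h01b)
    · exact habs ((g : Matrix (Fin 2) (Fin 2) ℤ) 1 0) (by rw [hcast 1 0, ← hm10d, hm10]; exact h10b)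
    · exact habs ((g : Matrix (Fin 2) (Fin 2) ℤ) 1 1) (by rw [hcast 1 1, ← hm11d, hm11']; exact h11b)
  -- conclude finiteness
  set φ : Matrix.SpecialLinearGroup (Fin 2) ℤ → (ℤ × ℤ) × (ℤ × ℤ) :=
    fun g => (((g : Matrix (Fin 2) (Fin 2) ℤ) 0 0, (g : Matrix (Fin 2) (Fin 2) ℤ) 0 1),
      ((g : Matrix (Fin 2) (Fin 2) ℤ) 1 0, (g : Matrix (Fin 2) (Fin 2) ℤ) 1 1)) with hφ
  have hinj : Function.Injective φ := by
    intro u v huv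
    simp only [hφ, Prod.mk.injEq] at huv
    obtain ⟨⟨h1, h2⟩, h3, h4⟩ := huv
    ext i j
    fin_cases i <;> fin_cases j <;> assumption
  have hT : Set.Finite ((Set.Icc (-N) N ×ˢ Set.Icc (-N) N) ×ˢ
      (Set.Icc (-N) N ×ˢ Set.Icc (-N) N)) :=
    ((Set.finite_Icc _ _).prod (Set.finite_Icc _ _)).prod
      ((Set.finite_Icc _ _).prod (Set.finite_Icc _ _))
  refine Set.Finite.subset (hT.preimage hinj.injOn) ?_
  intro g hg
  have h := hbound g hg
  simp only [Set.mem_preimage, hφ, Set.mem_prod]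
  exact ⟨⟨h 0 0, h 0 1⟩, h 1 0, h 1 1⟩
end

section
/- For every τ in the complex upper half plane ℍ, the theta value Θ(τ) = 1 + 2·∑_{n=1}^{∞} e^{2πin²τ} = ∑_{n∈ℤ} e^{2πin²τ} is nonzero; that is, Θ is nowhere-vanishing on ℍ. -/
noncomputable section ThetaAux

open Complex Real Function


private lemma cexp_add_int_mul (a : ℂ) (k : ℤ) : cexp (a + k * (2 * π * I)) = cexp a := by
  rw [Complex.exp_add, Complex.exp_int_mul_two_pi_mul_I, mul_one]

private lemma lawA1 (τ : ℂ) : jacobiTheta₂ 0 (τ + 1) = jacobiTheta₂ (1/2) τ := by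
  refine tsum_congr fun n => ?_
  obtain ⟨k, hk⟩ := Int.even_mul_succ_self (n - 1)
  have hk2 : (n - 1) * n = k + k := by linarith [hk]
  have hk' : ((n : ℂ) - 1) * n = k + k := by exact_mod_cast hk2
  rw [jacobiTheta₂_term, jacobiTheta₂_term,
    show (2 * π * I * n * 0 + π * I * n ^ 2 * (τ + 1) : ℂ)
      = (2 * π * I * n * (1/2) + π * I * n ^ 2 * τ) + k * (2 * π * I) by
        push_cast at hk' ⊢; linear_combination (π * I) * hk',
    cexp_add_int_mul]

private lemma lawA2 (τ : ℂ) : jacobiTheta₂ (1/2) (τ + 1) = jacobiTheta₂ 0 τ := by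
  refine tsum_congr fun n => ?_
  obtain ⟨k, hk⟩ := Int.even_mul_succ_self n
  have hk' : (n : ℂ) * (n + 1) = k + k := by exact_mod_cast hk
  rw [jacobiTheta₂_term, jacobiTheta₂_term,
    show (2 * π * I * n * (1/2) + π * I * n ^ 2 * (τ + 1) : ℂ)
      = (2 * π * I * n * 0 + π * I * n ^ 2 * τ) + k * (2 * π * I) by
        linear_combination (π * I) * hk',
    cexp_add_int_mul]

private lemma lawA3 (τ : ℂ) : jacobiTheta₂ ((τ + 1)/2) (τ + 1) = jacobiTheta₂ (τ/2) τ := by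
  refine tsum_congr fun n => ?_
  obtain ⟨k, hk⟩ := Int.even_mul_succ_self n
  have hk' : (n : ℂ) * (n + 1) = k + k := by exact_mod_cast hk
  rw [jacobiTheta₂_term, jacobiTheta₂_term,
    show (2 * π * I * n * ((τ + 1)/2) + π * I * n ^ 2 * (τ + 1) : ℂ)
      = (2 * π * I * n * (τ/2) + π * I * n ^ 2 * τ) + k * (2 * π * I) by
        linear_combination (π * I) * hk',
    cexp_add_int_mul]

private lemma factor_ne {τ : ℂ} (hτ : τ ≠ 0) (z : ℂ) :
    1 / (-I * τ) ^ (1 / 2 : ℂ) * cexp (-π * I * z ^ 2 / τ) ≠ 0 := by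
  apply mul_ne_zero
  · rw [one_div, ne_eq, inv_eq_zero, Complex.cpow_eq_zero_iff, not_and_or]
    exact Or.inl (mul_ne_zero (neg_ne_zero.mpr I_ne_zero) hτ)
  · exact Complex.exp_ne_zero _

private lemma lawS0 {τ : ℂ} (hτ : τ ≠ 0) :
    (jacobiTheta₂ 0 τ = 0 ↔ jacobiTheta₂ 0 (-1/τ) = 0) := by
  rw [jacobiTheta₂_functional_equation 0 τ, zero_div,
    mul_eq_zero, or_iff_right (factor_ne hτ 0)]

private lemma lawS1 {τ : ℂ} (hτ : τ ≠ 0) :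
    (jacobiTheta₂ (1/2) τ = 0 ↔ jacobiTheta₂ ((-1/τ)/2) (-1/τ) = 0) := by
  have h1 : ((-1/τ)/2 : ℂ) = -((1/2)/τ) := by ring
  rw [h1, jacobiTheta₂_neg_left, jacobiTheta₂_functional_equation (1/2) τ,
    mul_eq_zero, or_iff_right (factor_ne hτ (1/2))]

private lemma lawS2 {τ : ℂ} (hτ : τ ≠ 0) :
    (jacobiTheta₂ (τ/2) τ = 0 ↔ jacobiTheta₂ (1/2) (-1/τ) = 0) := by
  have h1 : ((τ/2)/τ : ℂ) = 1/2 := by field_simp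
  rw [jacobiTheta₂_functional_equation (τ/2) τ, h1,
    mul_eq_zero, or_iff_right (factor_ne hτ (τ/2))]

/-- vanishing locus predicate -/
def Vp (τ : ℂ) : Prop :=
  jacobiTheta₂ 0 τ = 0 ∨ jacobiTheta₂ (1/2) τ = 0 ∨ jacobiTheta₂ (τ/2) τ = 0

private lemma Vp_add_one (τ : ℂ) : Vp (τ + 1) ↔ Vp τ := by
  unfold Vp
  rw [lawA1, lawA2, lawA3]
  tauto

private lemma Vp_S {τ : ℂ} (hτ : τ ≠ 0) : Vp (-1/τ) ↔ Vp τ := by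
  unfold Vp
  rw [← lawS0 hτ, ← lawS1 hτ, ← lawS2 hτ]
  tauto


private lemma hasSum_G {r : ℝ} (h0 : 0 < r) (h1 : r < 1) :
    HasSum (fun n : ℤ => if n = 0 then (0:ℝ) else r ^ n.natAbs) (2 * r / (1 - r)) := by
  set G : ℤ → ℝ := fun n => if n = 0 then (0:ℝ) else r ^ n.natAbs with hGdef
  have geo : HasSum (fun n : ℕ => r ^ n) (1 - r)⁻¹ :=
    hasSum_geometric_of_lt_one h0.le h1
  have g1 : HasSum (fun n : ℕ => G n) (0 - r ^ 0 + (1 - r)⁻¹) := by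
    refine (geo.update 0 0).congr_fun fun n => ?_
    rw [Function.update_apply]
    simp [hGdef, Int.natCast_eq_zero]
  have g2 : HasSum (fun n : ℕ => G (-((n:ℤ) + 1))) ((1 - r)⁻¹ * r) := by
    refine (geo.mul_right r).congr_fun fun n => ?_
    have h : (-((n:ℤ) + 1)) ≠ 0 := by omega
    have h2 : (-((n:ℤ) + 1)).natAbs = n + 1 := by omega
    simp only [hGdef, if_neg h, h2, pow_succ]
  have := g1.of_nat_of_neg_add_one g2
  convert this using 1
  have hr : 1 - r ≠ 0 := by linarith
  field_simp
  ring

private lemma r_lt_third {t : ℝ} (ht : 1/2 ≤ t) : rexp (-π * t) < 1/3 := by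
  have h1 : rexp (-π * t) ≤ rexp (-(3/2)) := by
    apply Real.exp_le_exp.mpr
    nlinarith [Real.pi_gt_three]
  have h2 : rexp (-(3/2)) < 1/3 := by
    have h3 : rexp 1 ^ (3:ℕ) = rexp 3 := by
      rw [← Real.exp_nat_mul]; norm_num
    have h4 : rexp (3/2) ^ (2:ℕ) = rexp 3 := by
      rw [← Real.exp_nat_mul]; norm_num
    have h7 : (2.7182818283:ℝ)^(3:ℕ) < rexp 1 ^ (3:ℕ) :=
      pow_lt_pow_left₀ Real.exp_one_gt_d9 (by norm_num) (by norm_num)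
    have h6 : (9:ℝ) < rexp 3 := by
      rw [← h3]; norm_num at h7 ⊢; linarith
    have h5 : (3:ℝ) < rexp (3/2) := by
      nlinarith [Real.exp_pos (3/2 : ℝ)]
    rw [Real.exp_neg, show (1:ℝ)/3 = 3⁻¹ by norm_num]
    exact inv_strictAnti₀ (by norm_num) h5
  linarith

/-- main tail estimate: if the 0th term is 1 and all other terms are bounded by `r^|n|`,
then the theta series is nonzero. -/
private lemma jacobiTheta₂_ne_zero_of_bound {σ : ℂ} (h0 : 0 < σ.im) (ht : 1/2 ≤ σ.im) {z : ℂ}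
    (hz : jacobiTheta₂_term 0 z σ = 1)
    (hb : ∀ n : ℤ, n ≠ 0 → ‖jacobiTheta₂_term n z σ‖ ≤ rexp (-π * σ.im) ^ n.natAbs) :
    jacobiTheta₂ z σ ≠ 0 := by
  set r := rexp (-π * σ.im) with hr
  have hr0 : 0 < r := Real.exp_pos _
  have hr3 : r < 1/3 := r_lt_third ht
  have hsum : HasSum (fun n : ℤ => jacobiTheta₂_term n z σ) (jacobiTheta₂ z σ) :=
    hasSum_jacobiTheta₂_term z h0
  have key : jacobiTheta₂ z σ
      = 1 + ∑' n : ℤ, if n = 0 then (0:ℂ) else jacobiTheta₂_term n z σ := by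
    rw [← hz, ← hsum.tsum_eq]
    exact hsum.summable.tsum_eq_add_tsum_ite 0
  have tail : ‖∑' n : ℤ, if n = 0 then (0:ℂ) else jacobiTheta₂_term n z σ‖
      ≤ 2 * r / (1 - r) := by
    refine tsum_of_norm_bounded (hasSum_G hr0 (by linarith)) fun n => ?_
    by_cases h : n = 0
    · simp [h]
    · simpa [h] using hb n h
  have hlt : 2 * r / (1 - r) < 1 := by
    rw [div_lt_one (by linarith)]
    linarith
  intro hcontra
  rw [hcontra] at key
  have hx : (∑' n : ℤ, if n = 0 then (0:ℂ) else jacobiTheta₂_term n z σ) = -1 := by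
    linear_combination -key
  rw [hx] at tail
  simp only [norm_neg, norm_one] at tail
  linarith

/-- variant with two exceptional terms (for the `θ₂`-type series). -/
private lemma jacobiTheta₂_ne_zero_of_bound' {σ : ℂ} (h0 : 0 < σ.im) (ht : 1/2 ≤ σ.im) {z : ℂ}
    (hz0 : jacobiTheta₂_term 0 z σ = 1) (hz1 : jacobiTheta₂_term (-1) z σ = 1)
    (hb : ∀ n : ℤ, n ≠ 0 → n ≠ -1 →
      ‖jacobiTheta₂_term n z σ‖ ≤ rexp (-π * σ.im) ^ n.natAbs) :
    jacobiTheta₂ z σ ≠ 0 := by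
  set r := rexp (-π * σ.im) with hr
  have hr0 : 0 < r := Real.exp_pos _
  have hr3 : r < 1/3 := r_lt_third ht
  have hsum : HasSum (fun n : ℤ => jacobiTheta₂_term n z σ) (jacobiTheta₂ z σ) :=
    hasSum_jacobiTheta₂_term z h0
  set f : ℤ → ℂ := fun n => jacobiTheta₂_term n z σ with hf
  set u : ℤ → ℂ := fun n => if n = 0 then (0:ℂ) else f n with hu
  have hu_eq : u = Function.update f 0 0 :=
    funext fun n => (Function.update_apply f 0 0 n).symm
  have hu_sum : Summable u := hu_eq ▸ hsum.summable.update 0 0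
  have key : jacobiTheta₂ z σ = 2 + ∑' n : ℤ, if n = -1 then (0:ℂ) else u n := by
    have k1 : ∑' n, f n = f 0 + ∑' n, u n := hsum.summable.tsum_eq_add_tsum_ite 0
    have k2 : ∑' n, u n = u (-1) + ∑' n : ℤ, if n = -1 then (0:ℂ) else u n :=
      hu_sum.tsum_eq_add_tsum_ite (-1)
    have hu1 : u (-1) = 1 := by rw [hu]; simp only [hf]; rw [if_neg (by norm_num)]; exact hz1
    have hf0 : f 0 = 1 := hz0
    rw [← hsum.tsum_eq, k1, k2, hu1, hf0]
    ring
  have tail : ‖∑' n : ℤ, if n = -1 then (0:ℂ) else u n‖ ≤ 2 * r / (1 - r) := by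
    refine tsum_of_norm_bounded (hasSum_G hr0 (by linarith)) fun n => ?_
    by_cases h1 : n = -1
    · subst h1
      rw [if_pos rfl, norm_zero, if_neg (by norm_num : ¬ ((-1:ℤ) = 0))]
      positivity
    · rw [if_neg h1, hu]
      by_cases h0' : n = 0
      · simp [h0']
      · simp only [if_neg h0']
        simpa [h0'] using hb n h0' h1
  intro hcontra
  rw [hcontra] at key
  have hx : (∑' n : ℤ, if n = -1 then (0:ℂ) else u n) = -2 := by linear_combination -key
  rw [hx] at tail
  simp only [norm_neg] at tail
  have : ‖(2:ℂ)‖ = 2 := by norm_num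
  rw [this] at tail
  have hlt : 2 * r / (1 - r) < 1 := by
    rw [div_lt_one (by linarith)]; linarith
  linarith

private lemma natAbs_le_sq {n : ℤ} (hn : n ≠ 0) : (n.natAbs : ℝ) ≤ (n:ℝ)^2 := by
  have key : (n.natAbs : ℤ) ≤ n^2 := by
    rcases le_or_gt 0 n with h | h
    · rw [Int.natAbs_of_nonneg h]; nlinarith [Int.one_le_abs hn, abs_of_nonneg h]
    · rw [Int.ofNat_natAbs_of_nonpos h.le]; nlinarith
  have key2 : ((n.natAbs : ℤ) : ℝ) ≤ ((n^2 : ℤ) : ℝ) := by exact_mod_cast key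
  rw [Nat.cast_natAbs]
  push_cast at key2 ⊢
  linarith

private lemma natAbs_le_sq_add {n : ℤ} (hn0 : n ≠ 0) (hn1 : n ≠ -1) :
    (n.natAbs : ℝ) ≤ (n:ℝ)^2 + n := by
  have key : (n.natAbs : ℤ) ≤ n^2 + n := by
    rcases le_or_gt 0 n with h | h
    · rw [Int.natAbs_of_nonneg h]; nlinarith [sq_nonneg n]
    · have h2 : n ≤ -2 := by omega
      rw [Int.ofNat_natAbs_of_nonpos h.le]
      nlinarith
  have key2 : ((n.natAbs : ℤ) : ℝ) ≤ ((n^2 + n : ℤ) : ℝ) := by exact_mod_cast key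
  rw [Nat.cast_natAbs]
  push_cast at key2 ⊢
  linarith

private lemma L1 {σ : ℂ} (ht : 1/2 ≤ σ.im) : jacobiTheta₂ 0 σ ≠ 0 := by
  have h0 : 0 < σ.im := lt_of_lt_of_le (by norm_num) ht
  refine jacobiTheta₂_ne_zero_of_bound h0 ht ?_ ?_
  · simp [jacobiTheta₂_term]
  · intro n hn
    rw [norm_jacobiTheta₂_term, ← Real.exp_nat_mul]
    apply Real.exp_le_exp.mpr
    have hna := natAbs_le_sq hn
    have him : (0:ℂ).im = 0 := rfl
    rw [him]
    nlinarith [mul_le_mul_of_nonneg_right hna (le_of_lt (mul_pos Real.pi_pos h0))]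

private lemma L2 {σ : ℂ} (ht : 1/2 ≤ σ.im) : jacobiTheta₂ (1/2) σ ≠ 0 := by
  have h0 : 0 < σ.im := lt_of_lt_of_le (by norm_num) ht
  refine jacobiTheta₂_ne_zero_of_bound h0 ht ?_ ?_
  · simp [jacobiTheta₂_term]
  · intro n hn
    rw [norm_jacobiTheta₂_term, ← Real.exp_nat_mul]
    apply Real.exp_le_exp.mpr
    have hna := natAbs_le_sq hn
    have him : ((1:ℂ)/2).im = 0 := by norm_num
    rw [him]
    nlinarith [mul_le_mul_of_nonneg_right hna (le_of_lt (mul_pos Real.pi_pos h0))]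

private lemma L3 {σ : ℂ} (ht : 1/2 ≤ σ.im) : jacobiTheta₂ (σ/2) σ ≠ 0 := by
  have h0 : 0 < σ.im := lt_of_lt_of_le (by norm_num) ht
  refine jacobiTheta₂_ne_zero_of_bound' h0 ht ?_ ?_ ?_
  · simp [jacobiTheta₂_term]
  · rw [jacobiTheta₂_term,
      show (2 * π * I * ((-1 : ℤ) : ℂ) * (σ/2) + π * I * ((-1 : ℤ) : ℂ)^2 * σ : ℂ) = 0 by
        push_cast; ring,
      Complex.exp_zero]
  · intro n hn0 hn1
    rw [norm_jacobiTheta₂_term, ← Real.exp_nat_mul]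
    apply Real.exp_le_exp.mpr
    have hna := natAbs_le_sq_add hn0 hn1
    have him : (σ/2).im = σ.im/2 := by norm_num
    rw [him]
    nlinarith [mul_le_mul_of_nonneg_right hna (le_of_lt (mul_pos Real.pi_pos h0))]

section Orbit

open UpperHalfPlane ModularGroup Matrix.SpecialLinearGroup
open scoped MatrixGroups


/-- Reachability under the maps `τ ↦ τ+1`, `τ ↦ τ-1`, `τ ↦ -1/τ` on `ℍ`. -/
inductive Reach (z : ℍ) : ℍ → Prop
  | refl : Reach z z
  | step_T {w : ℍ} : Reach z w → Reach z (ModularGroup.T • w)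
  | step_T' {w : ℍ} : Reach z w → Reach z (ModularGroup.T⁻¹ • w)
  | step_S {w : ℍ} : Reach z w → Reach z (ModularGroup.S • w)

private lemma Reach.exists_g {z w : ℍ} (h : Reach z w) : ∃ g : SL(2, ℤ), w = g • z := by
  induction h with
  | refl => exact ⟨1, (one_smul _ _).symm⟩
  | step_T h ih => obtain ⟨g, rfl⟩ := ih; exact ⟨ModularGroup.T * g, (mul_smul _ _ _).symm⟩
  | step_T' h ih => obtain ⟨g, rfl⟩ := ih; exact ⟨ModularGroup.T⁻¹ * g, (mul_smul _ _ _).symm⟩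
  | step_S h ih => obtain ⟨g, rfl⟩ := ih; exact ⟨ModularGroup.S * g, (mul_smul _ _ _).symm⟩

private lemma Reach.T_zpow {z w : ℍ} (h : Reach z w) (n : ℤ) :
    Reach z (ModularGroup.T ^ n • w) := by
  induction n using Int.induction_on with
  | zero => simpa using h
  | succ k ih =>
      have : ModularGroup.T ^ ((k : ℤ) + 1) • w = ModularGroup.T • (ModularGroup.T ^ (k:ℤ) • w) := by
        rw [← mul_smul, ← zpow_one_add]
        norm_num [add_comm]
      rw [this]
      exact ih.step_T
  | pred k ih =>
      have : ModularGroup.T ^ (-(k : ℤ) - 1) • w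
          = ModularGroup.T⁻¹ • (ModularGroup.T ^ (-(k:ℤ)) • w) := by
        rw [← mul_smul, ← zpow_neg_one, ← zpow_add]
        ring_nf
      rw [this]
      exact ih.step_T'

/-- Every point reaches a point with imaginary part at least `1/2`. -/
private lemma exists_reach_im_ge (z : ℍ) : ∃ w : ℍ, Reach z w ∧ 1/2 ≤ w.im := by
  -- finiteness of pairs with small denominator
  have hfin : {p : Fin 2 → ℤ | Complex.normSq ((p 0 : ℂ) * z + p 1) ≤ 1}.Finite := by
    have hE := (tendsto_normSq_coprime_pair z).eventually (Filter.eventually_gt_atTop 1)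
    have := Filter.eventually_cofinite.mp hE
    refine this.subset fun p hp => ?_
    simpa using not_lt.mpr hp
  set A : Set ℝ := (fun w : ℍ => w.im) '' {w | Reach z w} ∩ Set.Ici z.im with hA
  have hA_sub : A ⊆ (fun p : Fin 2 → ℤ => z.im / Complex.normSq ((p 0 : ℂ) * z + p 1)) ''
      {p : Fin 2 → ℤ | Complex.normSq ((p 0 : ℂ) * z + p 1) ≤ 1} := by
    rintro a ⟨⟨w, hw, rfl⟩, ha⟩
    obtain ⟨g, rfl⟩ := Reach.exists_g hw
    have him : (g • z).im = z.im / Complex.normSq (denom g z) :=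
      ModularGroup.im_smul_eq_div_normSq g z
    have hpos : 0 < Complex.normSq (denom g z) := normSq_denom_pos (↑g) z.im_ne_zero
    have hle : Complex.normSq (denom g z) ≤ 1 := by
      have h1 : z.im ≤ z.im / Complex.normSq (denom g z) := him ▸ ha
      rw [le_div_iff₀ hpos] at h1
      nlinarith [z.im_pos]
    refine ⟨fun i => (↑g : Matrix (Fin 2) (Fin 2) ℤ) 1 i, ?_, ?_⟩
    · simpa [denom_apply] using hle
    · show z.im / Complex.normSq _ = (g • z).im
      rw [him, denom_apply]
  have hA_fin : A.Finite := (hfin.image _).subset hA_sub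
  have hA_ne : A.Nonempty := ⟨z.im, ⟨⟨z, Reach.refl, rfl⟩, Set.mem_Ici.mpr le_rfl⟩⟩
  obtain ⟨a, haA, hmax'⟩ := hA_fin.exists_maximalFor id A hA_ne
  have hza : z.im ≤ a := haA.2
  have hmax : ∀ w : ℍ, Reach z w → w.im ≤ a := by
    intro w hw
    by_contra hlt
    push_neg at hlt
    have hmem : w.im ∈ A := ⟨⟨w, hw, rfl⟩, Set.mem_Ici.mpr (le_trans hza hlt.le)⟩
    have := hmax' hmem hlt.le
    simp only [id] at this
    linarith
  obtain ⟨w₀, hw₀, hw₀im⟩ := haA.1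
  simp only at hw₀im
  set n : ℤ := -round w₀.re with hn
  set w₁ : ℍ := ModularGroup.T ^ n • w₀ with hw₁
  have hreach : Reach z w₁ := hw₀.T_zpow n
  have him1 : w₁.im = w₀.im := im_T_zpow_smul w₀ n
  have hre1 : w₁.re = w₀.re + n := re_T_zpow_smul w₀ n
  have hre_abs : |w₁.re| ≤ 1/2 := by
    rw [hre1, hn]
    push_cast
    rw [show w₀.re + -(round w₀.re : ℝ) = w₀.re - round w₀.re by ring]
    exact abs_sub_round w₀.re
  have hns : 1 ≤ Complex.normSq (w₁ : ℂ) := by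
    by_contra hlt
    push_neg at hlt
    have h1 : w₁.im < (ModularGroup.S • w₁).im := im_lt_im_S_smul hlt
    have h2 : (ModularGroup.S • w₁).im ≤ a := hmax _ hreach.step_S
    rw [him1, hw₀im] at h1
    linarith
  refine ⟨w₁, hreach, ?_⟩
  have hsq : w₁.re^2 ≤ (1/2)^2 := by
    rw [← _root_.sq_abs]
    exact pow_le_pow_left₀ (abs_nonneg _) hre_abs 2
  have hnseq : Complex.normSq (w₁ : ℂ) = w₁.re^2 + w₁.im^2 := by
    rw [Complex.normSq_apply, UpperHalfPlane.coe_re, UpperHalfPlane.coe_im]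
    ring
  nlinarith [w₁.im_pos]

private lemma Reach.Vp_iff {z w : ℍ} (h : Reach z w) : (Vp (z:ℂ) ↔ Vp (w:ℂ)) := by
  induction h with
  | refl => exact Iff.rfl
  | @step_T w' h ih =>
      have hc : ((ModularGroup.T • w' : ℍ) : ℂ) = (w':ℂ) + 1 := by
        rw [show ModularGroup.T = ModularGroup.T ^ (1:ℤ) from (zpow_one _).symm,
          coe_T_zpow_smul_eq]
        norm_num
      rw [hc, Vp_add_one]
      exact ih
  | @step_T' w' h ih =>
      have hc : ((ModularGroup.T⁻¹ • w' : ℍ) : ℂ) = (w':ℂ) - 1 := by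
        rw [show ModularGroup.T⁻¹ = ModularGroup.T ^ (-1:ℤ) from (zpow_neg_one _).symm,
          coe_T_zpow_smul_eq]
        push_cast
        ring
      have h2 : Vp ((w':ℂ) - 1 + 1) ↔ Vp ((w':ℂ) - 1) := Vp_add_one _
      rw [sub_add_cancel] at h2
      rw [hc]
      exact ih.trans h2
  | @step_S w' h ih =>
      have hne : (w':ℂ) ≠ 0 := ne_of_apply_ne Complex.im (by simp [w'.im_pos.ne'])
      have hc : ((ModularGroup.S • w' : ℍ) : ℂ) = -1 / (w':ℂ) := by
        rw [UpperHalfPlane.modular_S_smul, UpperHalfPlane.coe_mk]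
        rw [inv_neg, neg_div, one_div]
      rw [hc]
      exact ih.trans (Vp_S hne).symm

end Orbit

end ThetaAux

open Complex Real

/-- The Jacobi theta value
`Θ(τ) = ∑_{n ∈ ℤ} e^{2πin²τ}  (= 1 + 2∑_{n ≥ 1} q^{n²})` is nonzero for every `τ` in
the upper half plane. -/
theorem theta_nowhere_vanishing (τ : ℂ) (hτ : 0 < τ.im) :
    (∑' n : ℤ, Complex.exp (2 * Real.pi * Complex.I * (n : ℂ) ^ 2 * τ)) ≠ 0 := by
  have h2im : 0 < (2 * τ).im := by
    have : (2 * τ).im = 2 * τ.im := by simp [Complex.mul_im]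
    rw [this]; linarith
  have heq : (∑' n : ℤ, Complex.exp (2 * Real.pi * Complex.I * (n : ℂ) ^ 2 * τ))
      = jacobiTheta₂ 0 (2 * τ) := by
    rw [jacobiTheta₂]
    refine tsum_congr fun n => ?_
    rw [jacobiTheta₂_term]
    congr 1
    ring
  rw [heq]
  intro h0
  have hV : Vp (2 * τ) := Or.inl h0
  obtain ⟨w, hr, hw⟩ := exists_reach_im_ge ⟨2 * τ, h2im⟩
  have hw' : 1/2 ≤ (w : ℂ).im := hw
  have hVw : Vp (w : ℂ) := hr.Vp_iff.mp hV
  rcases hVw with h | h | h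
  · exact L1 hw' h
  · exact L2 hw' h
  · exact L3 hw' h
end
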